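/- Let α ∈ (0,1], let D_α^U be as in Theorem 1, and set D̃ = max(D_α^U, 1). Then Var(D̃) = -e^{4α}/16 + (4/9)e^{3α} + (α/4 - 5/8)e^{2α} - α²/4 - α/12 + 35/144. Moreover Var(D̃) = Var(D_α^U) - 2(1-α)E[D_α^U] + α - α². -/

import Mathlib

open Real MeasureTheory ProbabilityTheory
open scoped ENNReal NNReal

/-- FTC: `∫ t in 0..x, (b + t) e^{ct} dt`. -/
lemma aux_ftc (b c x : ℝ) (hc : c ≠ 0) :
    ∫ t in (0:ℝ)..x, (b + t) * Real.exp (c * t)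
      = ((b + x) * Real.exp (c * x) / c - Real.exp (c * x) / c ^ 2)
        - (b / c - 1 / c ^ 2) := by
  have hder : ∀ t : ℝ, HasDerivAt
      (fun t => (b + t) * Real.exp (c * t) / c - Real.exp (c * t) / c ^ 2)
      ((b + t) * Real.exp (c * t)) t := by
    intro t
    have h1 : HasDerivAt (fun t : ℝ => c * t) c t := by
      simpa using (hasDerivAt_id t).const_mul c
    have hexp : HasDerivAt (fun t : ℝ => Real.exp (c * t)) (Real.exp (c * t) * c) t :=
      h1.exp
    have hbt : HasDerivAt (fun t : ℝ => b + t) 1 t := (hasDerivAt_id t).const_add b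
    have := ((hbt.mul hexp).div_const c).sub (hexp.div_const (c ^ 2))
    refine this.congr_deriv ?_
    field_simp
    ring
  rw [intervalIntegral.integral_eq_sub_of_hasDerivAt (fun t _ => hder t)
      (Continuous.intervalIntegrable (by continuity) _ _)]
  simp [mul_comm]

/-- `∑ (n+1) x^n = 1/(1-x)^2`. -/
lemma aux_hs1 {x : ℝ} (h1 : |x| < 1) :
    HasSum (fun n : ℕ => ((n : ℝ) + 1) * x ^ n) (1 / (1 - x) ^ 2) := by
  have := hasSum_choose_mul_geometric_of_norm_lt_one (𝕜 := ℝ) 1 (by rwa [Real.norm_eq_abs])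
  simpa [Nat.choose_one_right] using this

lemma aux_choose_two (n : ℕ) : (((n + 2).choose 2 : ℕ) : ℝ) = ((n : ℝ) + 1) * ((n : ℝ) + 2) / 2 := by
  have h : (n + 2).choose 2 * 2 = (n + 1) * (n + 2) := by
    induction n with
    | zero => rfl
    | succ m ih =>
      have e : (m + 1 + 2).choose 2 = (m + 2).choose 1 + (m + 2).choose 2 :=
        Nat.choose_succ_succ (m + 2) 1
      rw [e, Nat.choose_one_right, add_mul, ih]
      ring
  have := congrArg (fun m : ℕ => (m : ℝ)) h
  push_cast at this
  linarith

/-- `∑ (n+1)^2 x^n = 2/(1-x)^3 - 1/(1-x)^2`. -/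
lemma aux_hs2 {x : ℝ} (h1 : |x| < 1) :
    HasSum (fun n : ℕ => ((n : ℝ) + 1) ^ 2 * x ^ n)
      (2 / (1 - x) ^ 3 - 1 / (1 - x) ^ 2) := by
  have h2 := (hasSum_choose_mul_geometric_of_norm_lt_one (𝕜 := ℝ) 2
    (by rwa [Real.norm_eq_abs])).mul_left 2
  have := h2.sub (aux_hs1 h1)
  convert this using 2 with n
  · rfl
  · rw [aux_choose_two]
    ring
  · rw [div_eq_mul_inv]
    norm_num
/-- Integrability on `ℕ` from a summable bound. -/
lemma aux_integrable {μ : Measure ℕ} [IsFiniteMeasure μ] {f g : ℕ → ℝ}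
    (hfg : ∀ k, ‖f k‖ ≤ g k)
    (h : Summable fun k => g k * (μ {k}).toReal) : Integrable f μ := by
  have hg0 : ∀ k, 0 ≤ g k := fun k => (norm_nonneg _).trans (hfg k)
  refine ⟨(measurable_from_top (f := f)).aestronglyMeasurable, ?_⟩
  show (∫⁻ a, (‖f a‖₊ : ENNReal) ∂μ) < ⊤
  calc ∫⁻ a, ‖f a‖₊ ∂μ = ∑' k, (‖f k‖₊ : ℝ≥0∞) * μ {k} := lintegral_countable' _
    _ ≤ ∑' k, ENNReal.ofReal (g k * (μ {k}).toReal) := by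
        refine ENNReal.tsum_le_tsum fun k => ?_
        rw [ENNReal.ofReal_mul (hg0 k), ← enorm_eq_nnnorm, ← ofReal_norm,
          ENNReal.ofReal_toReal (measure_ne_top μ _)]
        exact mul_le_mul_left (ENNReal.ofReal_le_ofReal (hfg k)) _
    _ = ENNReal.ofReal (∑' k, g k * (μ {k}).toReal) :=
        (ENNReal.ofReal_tsum_of_nonneg
          (fun k => mul_nonneg (hg0 k) ENNReal.toReal_nonneg) h).symm
    _ < ⊤ := ENNReal.ofReal_lt_top

/-- Interchange of tsum and integral. -/
lemma aux_swap {α : ℝ} (hα0 : 0 < α) (hα1 : α ≤ 1) (c : ℕ → ℝ) (hc : ∀ n, 0 ≤ c n)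
    (hs : Summable fun n => c n * (1 - Real.exp (-α)) ^ n) :
    ∑' k : ℕ, c k * (∫ t in (0:ℝ)..α, (1 - α + t) * (1 - Real.exp (-t)) ^ k) =
      ∫ t in Set.Ioc (0:ℝ) α, ((1 - α + t) * ∑' k : ℕ, c k * (1 - Real.exp (-t)) ^ k) := by
  set r := 1 - Real.exp (-α) with hr
  set f : ℕ → ℝ → ℝ := fun k t => c k * ((1 - α + t) * (1 - Real.exp (-t)) ^ k) with hf
  have hbd : ∀ k : ℕ, ∀ t ∈ Set.Ioc (0:ℝ) α, ‖f k t‖ ≤ c k * r ^ k := by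
    intro k t ht
    have ht0 : 0 < t := ht.1
    have htα : t ≤ α := ht.2
    have h1 : (0:ℝ) ≤ 1 - α + t := by linarith
    have h2 : 1 - α + t ≤ 1 := by linarith
    have h3 : (0:ℝ) ≤ 1 - Real.exp (-t) := by
      have : Real.exp (-t) ≤ 1 := Real.exp_le_one_iff.2 (by linarith)
      linarith
    have h4 : 1 - Real.exp (-t) ≤ r := by
      have : Real.exp (-α) ≤ Real.exp (-t) := Real.exp_le_exp.2 (by linarith)
      rw [hr]; linarith
    rw [hf]
    simp only [norm_mul, Real.norm_eq_abs, abs_of_nonneg (hc k), abs_of_nonneg h1,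
      abs_pow, abs_of_nonneg h3]
    calc c k * ((1 - α + t) * (1 - Real.exp (-t)) ^ k)
        ≤ c k * (1 * r ^ k) := by
          refine mul_le_mul_of_nonneg_left ?_ (hc k)
          exact mul_le_mul h2 (pow_le_pow_left₀ h3 h4 k) (pow_nonneg h3 k) zero_le_one
      _ = c k * r ^ k := by ring
  have hmeas : ∀ k : ℕ, AEStronglyMeasurable (f k) (volume.restrict (Set.Ioc (0:ℝ) α)) := by
    intro k
    exact (Continuous.aestronglyMeasurable (by fun_prop))
  have hfin : (∑' k : ℕ, ∫⁻ t in Set.Ioc (0:ℝ) α, ‖f k t‖₊ ∂volume) ≠ ⊤ := by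
    have hbd2 : ∀ k : ℕ, (∫⁻ t in Set.Ioc (0:ℝ) α, ‖f k t‖₊ ∂volume)
        ≤ ENNReal.ofReal (c k * r ^ k * α) := by
      intro k
      calc ∫⁻ t in Set.Ioc (0:ℝ) α, ‖f k t‖₊ ∂volume
          ≤ ∫⁻ _ in Set.Ioc (0:ℝ) α, ENNReal.ofReal (c k * r ^ k) ∂volume := by
            refine setLIntegral_mono measurable_const fun t ht => ?_
            rw [← enorm_eq_nnnorm, ← ofReal_norm]
            exact ENNReal.ofReal_le_ofReal (hbd k t ht)
        _ = ENNReal.ofReal (c k * r ^ k) * volume (Set.Ioc (0:ℝ) α) := by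
            rw [setLIntegral_const]
        _ = ENNReal.ofReal (c k * r ^ k * α) := by
            rw [Real.volume_Ioc, ← ENNReal.ofReal_mul]
            · norm_num
            · have h3 : (0:ℝ) ≤ r := by
                have : Real.exp (-α) ≤ 1 := Real.exp_le_one_iff.2 (by linarith)
                rw [hr]; linarith
              exact mul_nonneg (hc k) (pow_nonneg h3 k)
    refine ne_top_of_le_ne_top ?_ (ENNReal.tsum_le_tsum hbd2)
    rw [← ENNReal.ofReal_tsum_of_nonneg]
    · exact ENNReal.ofReal_ne_top
    · intro k
      have h3 : (0:ℝ) ≤ r := by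
        have : Real.exp (-α) ≤ 1 := Real.exp_le_one_iff.2 (by linarith)
        rw [hr]; linarith
      exact mul_nonneg (mul_nonneg (hc k) (pow_nonneg h3 k)) hα0.le
    · exact hs.mul_right α
  calc ∑' k : ℕ, c k * ∫ t in (0:ℝ)..α, (1 - α + t) * (1 - Real.exp (-t)) ^ k
      = ∑' k : ℕ, ∫ t in Set.Ioc (0:ℝ) α, f k t := by
        refine tsum_congr fun k => ?_
        rw [intervalIntegral.integral_of_le hα0.le, ← integral_const_mul]
    _ = ∫ t in Set.Ioc (0:ℝ) α, ∑' k : ℕ, f k t := (integral_tsum hmeas hfin).symm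
    _ = ∫ t in Set.Ioc (0:ℝ) α, ((1 - α + t) * ∑' k : ℕ, c k * (1 - Real.exp (-t)) ^ k) := by
        refine integral_congr_ae (Filter.Eventually.of_forall fun t => ?_)
        have : ∑' k : ℕ, f k t = (1 - α + t) * ∑' k : ℕ, c k * (1 - Real.exp (-t)) ^ k := by
          rw [← tsum_mul_left]
          exact tsum_congr fun k => by ring
        simpa using this
lemma aux_geom (m : ℕ) (b : ℝ) {r : ℝ} (h0 : 0 ≤ r) (h1 : r < 1) :
    Summable fun k : ℕ => ((k : ℝ) + b) ^ m * r ^ k := by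
  have hnorm : ‖r‖ < 1 := by rwa [Real.norm_of_nonneg h0]
  have key : ∀ k : ℕ, ((k : ℝ) + b) ^ m * r ^ k
      = ∑ i ∈ Finset.range (m + 1), (b ^ (m - i) * (m.choose i : ℝ)) * ((k : ℝ) ^ i * r ^ k) := by
    intro k
    rw [add_pow, Finset.sum_mul]
    exact Finset.sum_congr rfl fun i _ => by ring
  exact (summable_sum fun i (_ : i ∈ Finset.range (m + 1)) =>
    (summable_pow_mul_geometric_of_norm_lt_one i hnorm).mul_left _).congr
    fun k => (key k).symm

/-- Variance of the limiting number of probes `D̃ = max(D_α^U, 1)` in an unsuccessful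
search, and its relation to the variance and mean of `D_α^U`. -/
theorem stmt_19 (α : ℝ) (hα : α ∈ Set.Ioc (0:ℝ) 1)
    (μ : Measure ℕ) [IsProbabilityMeasure μ]
    (h0 : (μ {0}).toReal = 1 - α)
    (hk : ∀ k : ℕ, 1 ≤ k →
      (μ {k}).toReal = ∫ t in (0:ℝ)..α, (1 - α + t) * (1 - Real.exp (-t)) ^ (k - 1)) :
    variance (fun k : ℕ => max (k : ℝ) 1) μ =
      -Real.exp (4 * α) / 16 + (4 / 9) * Real.exp (3 * α)
        + (α / 4 - 5 / 8) * Real.exp (2 * α) - α ^ 2 / 4 - α / 12 + 35 / 144 ∧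
    variance (fun k : ℕ => max (k : ℝ) 1) μ =
      variance (fun k : ℕ => (k : ℝ)) μ
        - 2 * (1 - α) * (∫ k, (k : ℝ) ∂μ) + α - α ^ 2 := by
  obtain ⟨hα0, hα1⟩ := hα
  set r : ℝ := 1 - Real.exp (-α) with hrdef
  have hexpneg : 0 < Real.exp (-α) := Real.exp_pos _
  have hexple : Real.exp (-α) ≤ 1 := Real.exp_le_one_iff.2 (by linarith)
  have hr0 : 0 ≤ r := by rw [hrdef]; linarith
  have hr1 : r < 1 := by rw [hrdef]; linarith
  have hrabs : |r| < 1 := abs_lt.2 ⟨by linarith, hr1⟩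
  set p : ℕ → ℝ := fun k => (μ {k}).toReal with hpdef
  have hp_nonneg : ∀ k, 0 ≤ p k := fun k => ENNReal.toReal_nonneg
  have hpk : ∀ k : ℕ, p (k + 1) = ∫ t in (0:ℝ)..α, (1 - α + t) * (1 - Real.exp (-t)) ^ k := by
    intro k
    have := hk (k + 1) (by omega)
    simpa using this
  -- pointwise bound on p
  have hp_le : ∀ k : ℕ, p (k + 1) ≤ α * r ^ k := by
    intro k
    rw [hpk]
    have hle : ∫ t in (0:ℝ)..α, (1 - α + t) * (1 - Real.exp (-t)) ^ k
        ≤ ∫ _ in (0:ℝ)..α, r ^ k := by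
      refine intervalIntegral.integral_mono_on hα0.le
        (Continuous.intervalIntegrable (by fun_prop) _ _) intervalIntegrable_const ?_
      intro t ht
      obtain ⟨ht0, htα⟩ := ht
      have h1 : (0:ℝ) ≤ 1 - α + t := by linarith
      have h2 : 1 - α + t ≤ 1 := by linarith
      have h3 : (0:ℝ) ≤ 1 - Real.exp (-t) := by
        have : Real.exp (-t) ≤ 1 := Real.exp_le_one_iff.2 (by linarith)
        linarith
      have h4 : 1 - Real.exp (-t) ≤ r := by
        have : Real.exp (-α) ≤ Real.exp (-t) := Real.exp_le_exp.2 (by linarith)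
        rw [hrdef]; linarith
      calc (1 - α + t) * (1 - Real.exp (-t)) ^ k ≤ 1 * r ^ k :=
            mul_le_mul h2 (pow_le_pow_left₀ h3 h4 k) (pow_nonneg h3 k) zero_le_one
        _ = r ^ k := one_mul _
    simpa using hle
  -- master summability
  have hsumm : ∀ m : ℕ, Summable fun k : ℕ => ((k : ℝ) + 1) ^ m * p k := by
    intro m
    rw [← summable_nat_add_iff 1]
    refine Summable.of_nonneg_of_le
      (fun k => mul_nonneg (pow_nonneg (by positivity) m) (hp_nonneg _))
      (fun k => ?_) ((aux_geom m 2 hr0 hr1).mul_left α)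
    push_cast
    have e : ((k : ℝ) + 1 + 1) = (k : ℝ) + 2 := by ring
    rw [e]
    calc ((k : ℝ) + 2) ^ m * p (k + 1) ≤ ((k : ℝ) + 2) ^ m * (α * r ^ k) :=
          mul_le_mul_of_nonneg_left (hp_le k) (by positivity)
      _ = α * (((k : ℝ) + 2) ^ m * r ^ k) := by ring
  -- specific summabilities
  have hsum_k : Summable fun k : ℕ => p k * (k : ℝ) := by
    refine Summable.of_nonneg_of_le (fun k => mul_nonneg (hp_nonneg k) (Nat.cast_nonneg k))
      (fun k => ?_) (hsumm 1)
    have h1 : (k : ℝ) ≤ (k : ℝ) + 1 := by linarith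
    nlinarith [hp_nonneg k, (Nat.cast_nonneg k : (0:ℝ) ≤ (k:ℝ))]
  have hsum_k2 : Summable fun k : ℕ => p k * (k : ℝ) ^ 2 := by
    refine Summable.of_nonneg_of_le (fun k => mul_nonneg (hp_nonneg k) (by positivity))
      (fun k => ?_) (hsumm 2)
    have h1 : (k : ℝ) ^ 2 ≤ ((k : ℝ) + 1) ^ 2 := by nlinarith [(Nat.cast_nonneg k : (0:ℝ) ≤ (k:ℝ))]
    nlinarith [hp_nonneg k]
  have hmax_le : ∀ k : ℕ, max (k : ℝ) 1 ≤ (k : ℝ) + 1 := fun k =>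
    max_le (by linarith) (by have := (Nat.cast_nonneg k : (0:ℝ) ≤ (k:ℝ)); linarith)
  have hmax_pos : ∀ k : ℕ, (0:ℝ) ≤ max (k : ℝ) 1 := fun k => le_max_of_le_right zero_le_one
  have hsum_max : Summable fun k : ℕ => p k * max (k : ℝ) 1 := by
    refine Summable.of_nonneg_of_le (fun k => mul_nonneg (hp_nonneg k) (hmax_pos k))
      (fun k => ?_) (hsumm 1)
    have := hmax_le k
    nlinarith [hp_nonneg k, hmax_pos k]
  have hsum_max2 : Summable fun k : ℕ => p k * (max (k : ℝ) 1) ^ 2 := by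
    refine Summable.of_nonneg_of_le (fun k => mul_nonneg (hp_nonneg k) (by positivity))
      (fun k => ?_) (hsumm 2)
    have h1 : (max (k : ℝ) 1) ^ 2 ≤ ((k : ℝ) + 1) ^ 2 :=
      pow_le_pow_left₀ (hmax_pos k) (hmax_le k) 2
    nlinarith [hp_nonneg k]
  -- integrabilities
  have hi1 : Integrable (fun k : ℕ => (k : ℝ)) μ := by
    refine aux_integrable (g := fun k => ((k : ℝ) + 1) ^ 1) (fun k => ?_) (hsumm 1)
    show ‖((k:ℕ):ℝ)‖ ≤ ((k : ℝ) + 1) ^ 1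
    rw [Real.norm_of_nonneg (Nat.cast_nonneg k), pow_one]
    linarith
  have hi2 : Integrable (fun k : ℕ => (k : ℝ) ^ 2) μ := by
    refine aux_integrable (g := fun k => ((k : ℝ) + 1) ^ 2) (fun k => ?_) (hsumm 2)
    show ‖((k:ℕ):ℝ) ^ 2‖ ≤ ((k : ℝ) + 1) ^ 2
    rw [Real.norm_of_nonneg (by positivity)]
    nlinarith [(Nat.cast_nonneg k : (0:ℝ) ≤ (k:ℝ))]
  have hi3 : Integrable (fun k : ℕ => max (k : ℝ) 1) μ := by
    refine aux_integrable (g := fun k => ((k : ℝ) + 1) ^ 1) (fun k => ?_) (hsumm 1)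
    show ‖max ((k:ℕ):ℝ) 1‖ ≤ ((k : ℝ) + 1) ^ 1
    rw [Real.norm_of_nonneg (hmax_pos k), pow_one]
    exact hmax_le k
  have hi4 : Integrable (fun k : ℕ => (max (k : ℝ) 1) ^ 2) μ := by
    refine aux_integrable (g := fun k => ((k : ℝ) + 1) ^ 2) (fun k => ?_) (hsumm 2)
    show ‖(max ((k:ℕ):ℝ) 1) ^ 2‖ ≤ ((k : ℝ) + 1) ^ 2
    rw [Real.norm_of_nonneg (by positivity)]
    exact pow_le_pow_left₀ (hmax_pos k) (hmax_le k) 2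
  -- Memℒp
  have hm1 : MemLp (fun k : ℕ => (k : ℝ)) 2 μ :=
    (memLp_two_iff_integrable_sq measurable_from_top.aestronglyMeasurable).2 hi2
  have hm2 : MemLp (fun k : ℕ => max (k : ℝ) 1) 2 μ :=
    (memLp_two_iff_integrable_sq measurable_from_top.aestronglyMeasurable).2 hi4
  -- the two shifted sums
  have hshift1 : ∑' k : ℕ, p (k + 1) * ((k : ℝ) + 1) = Real.exp (2 * α) / 4 + α / 2 - 1 / 4 := by
    have step : ∀ k : ℕ, p (k + 1) * ((k : ℝ) + 1)
        = ((k : ℝ) + 1) * ∫ t in (0:ℝ)..α, (1 - α + t) * (1 - Real.exp (-t)) ^ k := by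
      intro k
      rw [hpk k, mul_comm]
    rw [tsum_congr step]
    have hsw := aux_swap hα0 hα1 (fun k => (k : ℝ) + 1)
      (fun n => by positivity) ((aux_hs1 hrabs).summable)
    beta_reduce at hsw
    rw [hsw]
    have heq : Set.EqOn
        (fun t => (1 - α + t) * ∑' k : ℕ, ((k : ℝ) + 1) * (1 - Real.exp (-t)) ^ k)
        (fun t => (1 - α + t) * Real.exp (2 * t)) (Set.Ioc 0 α) := by
      intro t ht
      have ht0 : (0:ℝ) < t := ht.1
      have hx0 : (0:ℝ) ≤ 1 - Real.exp (-t) := by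
        have : Real.exp (-t) ≤ 1 := Real.exp_le_one_iff.2 (by linarith)
        linarith
      have hxabs : |1 - Real.exp (-t)| < 1 := by
        rw [abs_of_nonneg hx0]
        have : 0 < Real.exp (-t) := Real.exp_pos _
        linarith
      have hts := (aux_hs1 hxabs).tsum_eq
      simp only []
      rw [hts, show (1:ℝ) - (1 - Real.exp (-t)) = Real.exp (-t) by ring, Real.exp_neg,
        one_div, inv_pow, inv_inv, show (2:ℝ) * t = t + t by ring, Real.exp_add, sq]
    rw [setIntegral_congr_fun measurableSet_Ioc heq,
      ← intervalIntegral.integral_of_le hα0.le, aux_ftc (1 - α) 2 α two_ne_zero]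
    ring
  have hshift2 : ∑' k : ℕ, p (k + 1) * ((k : ℝ) + 1) ^ 2
      = 4 / 9 * Real.exp (3 * α) - Real.exp (2 * α) / 4 + α / 6 - 7 / 36 := by
    have step : ∀ k : ℕ, p (k + 1) * ((k : ℝ) + 1) ^ 2
        = ((k : ℝ) + 1) ^ 2 * ∫ t in (0:ℝ)..α, (1 - α + t) * (1 - Real.exp (-t)) ^ k := by
      intro k
      rw [hpk k, mul_comm]
    rw [tsum_congr step]
    have hsw := aux_swap hα0 hα1 (fun k => ((k : ℝ) + 1) ^ 2)
      (fun n => by positivity) ((aux_hs2 hrabs).summable)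
    beta_reduce at hsw
    rw [hsw]
    have heq : Set.EqOn
        (fun t => (1 - α + t) * ∑' k : ℕ, ((k : ℝ) + 1) ^ 2 * (1 - Real.exp (-t)) ^ k)
        (fun t => 2 * ((1 - α + t) * Real.exp (3 * t)) - (1 - α + t) * Real.exp (2 * t))
        (Set.Ioc 0 α) := by
      intro t ht
      have ht0 : (0:ℝ) < t := ht.1
      have hx0 : (0:ℝ) ≤ 1 - Real.exp (-t) := by
        have : Real.exp (-t) ≤ 1 := Real.exp_le_one_iff.2 (by linarith)
        linarith
      have hxabs : |1 - Real.exp (-t)| < 1 := by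
        rw [abs_of_nonneg hx0]
        have : 0 < Real.exp (-t) := Real.exp_pos _
        linarith
      have hts := (aux_hs2 hxabs).tsum_eq
      simp only []
      rw [hts, show (1:ℝ) - (1 - Real.exp (-t)) = Real.exp (-t) by ring, Real.exp_neg]
      have e2 : Real.exp (2 * t) = Real.exp t ^ 2 := by
        rw [show (2:ℝ) * t = t + t by ring, Real.exp_add, sq]
      have e3 : Real.exp (3 * t) = Real.exp t ^ 3 := by
        rw [show (3:ℝ) * t = t + t + t by ring, Real.exp_add, Real.exp_add]
        ring
      rw [e2, e3]
      have het : Real.exp t ≠ 0 := (Real.exp_pos t).ne'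
      field_simp
    rw [setIntegral_congr_fun measurableSet_Ioc heq,
      ← intervalIntegral.integral_of_le hα0.le]
    rw [intervalIntegral.integral_sub
        (((Continuous.intervalIntegrable (by fun_prop) _ _)).const_mul 2)
        (Continuous.intervalIntegrable (by fun_prop) _ _),
      intervalIntegral.integral_const_mul,
      aux_ftc (1 - α) 3 α three_ne_zero, aux_ftc (1 - α) 2 α two_ne_zero]
    ring
  -- the four integrals
  have hint1 : ∫ k, (k : ℝ) ∂μ = Real.exp (2 * α) / 4 + α / 2 - 1 / 4 := by
    rw [integral_countable' hi1]
    simp only [smul_eq_mul]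
    change ∑' x : ℕ, p x * (x:ℝ) = _
    rw [Summable.tsum_eq_zero_add hsum_k]
    simp only [Nat.cast_zero, mul_zero, zero_add]
    rw [← hshift1]
    exact tsum_congr fun k => by push_cast; ring
  have hint2 : ∫ k, (k : ℝ) ^ 2 ∂μ
      = 4 / 9 * Real.exp (3 * α) - Real.exp (2 * α) / 4 + α / 6 - 7 / 36 := by
    rw [integral_countable' hi2]
    simp only [smul_eq_mul]
    change ∑' x : ℕ, p x * (x:ℝ) ^ 2 = _
    rw [Summable.tsum_eq_zero_add hsum_k2]
    simp only [Nat.cast_zero, mul_zero, zero_add, ne_eq, OfNat.ofNat_ne_zero,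
      not_false_eq_true, zero_pow]
    rw [← hshift2]
    exact tsum_congr fun k => by push_cast; ring
  have hint3 : ∫ k, max (k : ℝ) 1 ∂μ = (1 - α) + (Real.exp (2 * α) / 4 + α / 2 - 1 / 4) := by
    rw [integral_countable' hi3]
    simp only [smul_eq_mul]
    change ∑' x : ℕ, p x * max (x:ℝ) 1 = _
    rw [Summable.tsum_eq_zero_add hsum_max]
    have t0 : p 0 * max ((0:ℕ) : ℝ) 1 = 1 - α := by
      simp only [Nat.cast_zero]
      rw [max_eq_right zero_le_one, mul_one]
      exact h0
    rw [t0, ← hshift1]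
    congr 1
    refine tsum_congr fun k => ?_
    have : max (((k + 1 : ℕ)) : ℝ) 1 = (k : ℝ) + 1 := by
      rw [max_eq_left]
      · push_cast; ring
      · push_cast
        have := (Nat.cast_nonneg k : (0:ℝ) ≤ (k:ℝ))
        linarith
    rw [this]
  have hint4 : ∫ k, (max (k : ℝ) 1) ^ 2 ∂μ
      = (1 - α) + (4 / 9 * Real.exp (3 * α) - Real.exp (2 * α) / 4 + α / 6 - 7 / 36) := by
    rw [integral_countable' hi4]
    simp only [smul_eq_mul]
    change ∑' x : ℕ, p x * (max (x:ℝ) 1) ^ 2 = _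
    rw [Summable.tsum_eq_zero_add hsum_max2]
    have t0 : p 0 * (max ((0:ℕ) : ℝ) 1) ^ 2 = 1 - α := by
      simp only [Nat.cast_zero]
      rw [max_eq_right zero_le_one, one_pow, mul_one]
      exact h0
    rw [t0, ← hshift2]
    congr 1
    refine tsum_congr fun k => ?_
    have : max (((k + 1 : ℕ)) : ℝ) 1 = (k : ℝ) + 1 := by
      rw [max_eq_left]
      · push_cast; ring
      · push_cast
        have := (Nat.cast_nonneg k : (0:ℝ) ≤ (k:ℝ))
        linarith
    rw [this]
  -- variances
  have hV1 : variance (fun k : ℕ => (k : ℝ)) μ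
      = (4 / 9 * Real.exp (3 * α) - Real.exp (2 * α) / 4 + α / 6 - 7 / 36)
        - (Real.exp (2 * α) / 4 + α / 2 - 1 / 4) ^ 2 := by
    rw [variance_eq_sub hm1]
    have hpow : ∫ k, ((fun k : ℕ => (k : ℝ)) ^ 2) k ∂μ = ∫ k, (k : ℝ) ^ 2 ∂μ := by
      refine integral_congr_ae (Filter.Eventually.of_forall fun k => ?_)
      simp [sq]
    rw [hpow, hint1, hint2]
  have hV2 : variance (fun k : ℕ => max (k : ℝ) 1) μ
      = ((1 - α) + (4 / 9 * Real.exp (3 * α) - Real.exp (2 * α) / 4 + α / 6 - 7 / 36))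
        - ((1 - α) + (Real.exp (2 * α) / 4 + α / 2 - 1 / 4)) ^ 2 := by
    rw [variance_eq_sub hm2]
    have hpow : ∫ k, ((fun k : ℕ => max (k : ℝ) 1) ^ 2) k ∂μ
        = ∫ k, (max (k : ℝ) 1) ^ 2 ∂μ := by
      refine integral_congr_ae (Filter.Eventually.of_forall fun k => ?_)
      simp [sq]
    rw [hpow, hint3, hint4]
  have e2 : Real.exp (2 * α) = Real.exp α ^ 2 := by
    rw [show (2:ℝ) * α = α + α by ring, Real.exp_add, sq]
  have e3 : Real.exp (3 * α) = Real.exp α ^ 3 := by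
    rw [show (3:ℝ) * α = α + α + α by ring, Real.exp_add, Real.exp_add]
    ring
  have e4 : Real.exp (4 * α) = Real.exp α ^ 4 := by
    rw [show (4:ℝ) * α = α + α + (α + α) by ring, Real.exp_add, Real.exp_add]
    ring
  constructor
  · rw [hV2, e2, e3, e4]
    ring
  · rw [hV2, hV1, hint1, e2, e3]
    ring
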